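/- arXiv:1411.7739 — 3 statements merged into one kernel-verified Lean document; each statement's English description precedes it below -/
import Mathlib

section
/- Let L₁, L₂ be positive integers and h > 0. For every finite set V ⊂ ℤ², the cell-board field satisfies 2·|Σ_{t∈V} h(t)| ≤ h·L₁·|∂ʰV| and 2·|Σ_{t∈V} h(t)| ≤ h·L₂·|∂ᵛV|; consequently 2·|Σ_{t∈V} h(t)| ≤ h·(L₁L₂/(L₁+L₂))·|∂V|. -/
open Finset


/-- Sign of the cell-board external field: `+1` on sites whose cell-coordinates
`⌊t₁/L₁⌋ + ⌊t₂/L₂⌋` (floor division) sum to an even number, and `-1` otherwise. -/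
noncomputable def cellSign (L1 L2 : ℕ) (t : ℤ × ℤ) : ℝ :=
  if Even (Int.fdiv t.1 (L1 : ℤ) + Int.fdiv t.2 (L2 : ℤ)) then 1 else -1

/-- The cell-board external field with amplitude `h`. -/
noncomputable def cellField (L1 L2 : ℕ) (h : ℝ) (t : ℤ × ℤ) : ℝ :=
  h * cellSign L1 L2 t

/-- Boundary edges of a finite set `V ⊂ ℤ²` in the direction `e`: the edge `{u, u+e}`
belongs to the boundary iff exactly one of its endpoints lies in `V`.  An edge is
represented by its base point `u`. -/
def bdry (V : Finset (ℤ × ℤ)) (e : ℤ × ℤ) : Finset (ℤ × ℤ) :=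
  (V ∪ V.image (fun u => u - e)).filter (fun u => ¬ ((u ∈ V) ↔ (u + e ∈ V)))



noncomputable def lsign (L : ℕ) (n : ℤ) : ℝ :=
  if Even (Int.fdiv n (L : ℤ)) then 1 else -1

noncomputable def saw (L : ℕ) (n : ℤ) : ℝ :=
  lsign L n * ((Int.fmod n (L : ℤ) : ℝ) - (L : ℝ) / 2)

lemma abs_lsign (L : ℕ) (n : ℤ) : |lsign L n| = 1 := by
  unfold lsign; split <;> simp

lemma abs_saw_le (L : ℕ) (hL : 0 < L) (n : ℤ) : |saw L n| ≤ (L : ℝ) / 2 := by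
  have hLpos : (0:ℤ) < (L:ℤ) := by exact_mod_cast hL
  have h0 : (0 : ℤ) ≤ Int.fmod n (L : ℤ) :=
    Int.fmod_eq_emod_of_nonneg n hLpos.le ▸ Int.emod_nonneg n hLpos.ne'
  have h1 : Int.fmod n (L : ℤ) < (L : ℤ) :=
    Int.fmod_eq_emod_of_nonneg n hLpos.le ▸ Int.emod_lt_of_pos n hLpos
  have h0' : (0:ℝ) ≤ (Int.fmod n (L : ℤ) : ℝ) := by exact_mod_cast h0
  have h1' : (Int.fmod n (L : ℤ) : ℝ) ≤ (L : ℝ) := by exact_mod_cast h1.le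
  rw [saw, abs_mul, abs_lsign, one_mul, abs_le]
  constructor <;> linarith

lemma saw_step (L : ℕ) (hL : 0 < L) (n : ℤ) : saw L (n + 1) - saw L n = lsign L n := by
  have hLpos : (0:ℤ) < (L:ℤ) := by exact_mod_cast hL
  have hd : Int.fdiv n (L:ℤ) = n / (L:ℤ) := Int.fdiv_eq_ediv_of_nonneg n hLpos.le
  have hm : Int.fmod n (L:ℤ) = n % (L:ℤ) := Int.fmod_eq_emod_of_nonneg n hLpos.le
  have hd1 : Int.fdiv (n+1) (L:ℤ) = (n+1) / (L:ℤ) := Int.fdiv_eq_ediv_of_nonneg _ hLpos.le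
  have hm1 : Int.fmod (n+1) (L:ℤ) = (n+1) % (L:ℤ) := Int.fmod_eq_emod_of_nonneg _ hLpos.le
  set q := n / (L:ℤ) with hq
  set r := n % (L:ℤ) with hr
  have h0 : 0 ≤ r := Int.emod_nonneg n hLpos.ne'
  have h1 : r < (L:ℤ) := Int.emod_lt_of_pos n hLpos
  have hn : r + (L:ℤ) * q = n := by rw [hr, hq]; exact Int.emod_add_mul_ediv n (L:ℤ)
  rcases eq_or_lt_of_le (by omega : r + 1 ≤ (L:ℤ)) with hcase | hcase
  · -- r + 1 = L : crossing into next cell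
    have key : (n+1) / (L:ℤ) = q + 1 ∧ (n+1) % (L:ℤ) = 0 :=
      (Int.ediv_emod_unique hLpos).mpr ⟨by linear_combination hn - hcase, le_refl 0, hLpos⟩
    have hrL : (r : ℝ) = (L : ℝ) - 1 := by
      have : r = (L:ℤ) - 1 := by omega
      rw [this]; push_cast; ring
    unfold saw lsign
    rw [hd1, hm1, key.1, key.2, hd, hm, hrL]
    have : Even (q + 1) ↔ ¬ Even q := by simp [Int.even_add_one]
    by_cases hq2 : Even q <;> simp [hq2, this] <;> push_cast <;> linarith [hrL]
  · -- same cell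
    have key : (n+1) / (L:ℤ) = q ∧ (n+1) % (L:ℤ) = r + 1 :=
      (Int.ediv_emod_unique hLpos).mpr ⟨by linear_combination hn, by omega, hcase⟩
    unfold saw lsign
    rw [hd1, hm1, key.1, key.2, hd, hm]
    push_cast
    by_cases hq2 : Even q <;> simp [hq2] <;> ring

lemma bdry_card (V : Finset (ℤ × ℤ)) (e : ℤ × ℤ) :
    (bdry V e).card =
      (V.image (· + e) \ V).card + (V \ V.image (· + e)).card := by
  classical
  set W : Finset (ℤ × ℤ) := V.image (· + e) with hW
  have hinj : Function.Injective (· + e : ℤ × ℤ → ℤ × ℤ) := fun a b hab => by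
    simpa using hab
  have hWmem : ∀ t : ℤ × ℤ, t ∈ W ↔ t - e ∈ V := by
    intro t
    simp only [hW, mem_image]
    constructor
    · rintro ⟨v, hv, rfl⟩; simpa using hv
    · intro ht; exact ⟨t - e, ht, by simp⟩
  have himg : (bdry V e).image (· + e) = (W \ V) ∪ (V \ W) := by
    ext t
    simp only [bdry, mem_image, mem_filter, mem_union, mem_sdiff]
    constructor
    · rintro ⟨u, ⟨_, hu2⟩, rfl⟩
      rw [hWmem (u + e)]
      simp only [add_sub_cancel_right]
      tauto
    · intro ht
      refine ⟨t - e, ⟨?_, ?_⟩, by simp⟩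
      · rw [hWmem t] at ht
        rcases ht with ⟨h1, h2⟩ | ⟨h1, h2⟩
        · exact Or.inl h1
        · exact Or.inr ⟨t, h1, rfl⟩
      · rw [hWmem t] at ht
        simp only [sub_add_cancel]
        tauto
  have hdisj : Disjoint (W \ V) (V \ W) := by
    rw [Finset.disjoint_left]
    intro a ha hb
    exact (mem_sdiff.mp ha).2 (mem_sdiff.mp hb).1
  calc (bdry V e).card = ((bdry V e).image (· + e)).card :=
        (Finset.card_image_of_injective _ hinj).symm
    _ = (W \ V).card + (V \ W).card := by rw [himg, Finset.card_union_of_disjoint hdisj]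

lemma abel_bound (e : ℤ × ℤ) (F s : ℤ × ℤ → ℝ) (C : ℝ)
    (hF : ∀ t, |F t| ≤ C) (hs : ∀ t, s t = F (t + e) - F t)
    (V : Finset (ℤ × ℤ)) :
    |∑ t ∈ V, s t| ≤ C * (bdry V e).card := by
  classical
  set W : Finset (ℤ × ℤ) := V.image (· + e) with hW
  have hinj : Function.Injective (· + e : ℤ × ℤ → ℤ × ℤ) := fun a b hab => by
    simpa using hab
  have h1 : ∑ t ∈ V, s t = ∑ t ∈ W \ V, F t - ∑ t ∈ V \ W, F t := by
    have h2 : ∑ t ∈ V, s t = ∑ t ∈ W, F t - ∑ t ∈ V, F t := by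
      rw [hW, Finset.sum_image (fun a _ b _ hab => hinj hab)]
      rw [← Finset.sum_sub_distrib]
      exact Finset.sum_congr rfl fun t _ => hs t
    rw [h2, Finset.sum_sdiff_sub_sum_sdiff]
  have hC : 0 ≤ C := le_trans (abs_nonneg _) (hF 0)
  rw [h1, bdry_card]
  push_cast
  calc |∑ t ∈ W \ V, F t - ∑ t ∈ V \ W, F t|
      ≤ |∑ t ∈ W \ V, F t| + |∑ t ∈ V \ W, F t| := abs_sub _ _
    _ ≤ (∑ t ∈ W \ V, |F t|) + ∑ t ∈ V \ W, |F t| :=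
        add_le_add (Finset.abs_sum_le_sum_abs _ _) (Finset.abs_sum_le_sum_abs _ _)
    _ ≤ (∑ _t ∈ W \ V, C) + ∑ _t ∈ V \ W, C :=
        add_le_add (Finset.sum_le_sum fun t _ => hF t) (Finset.sum_le_sum fun t _ => hF t)
    _ = C * ((W \ V).card + (V \ W).card) := by
        simp [Finset.sum_const, nsmul_eq_mul]; ring
    _ ≤ C * ((W \ V).card + (V \ W).card) := le_refl _

/-- for every finite `V ⊂ ℤ²`, the cell-board field satisfies
`2·|Σ_{t∈V} h(t)| ≤ h·L₁·|∂ʰV|`, `2·|Σ_{t∈V} h(t)| ≤ h·L₂·|∂ᵛV|`, and consequently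
`2·|Σ_{t∈V} h(t)| ≤ h·(L₁L₂/(L₁+L₂))·|∂V|`. -/
theorem cellField_sum_abs_le (L1 L2 : ℕ) (hL1 : 0 < L1) (hL2 : 0 < L2)
    (h : ℝ) (hh : 0 < h) (V : Finset (ℤ × ℤ)) :
    2 * |∑ t ∈ V, cellField L1 L2 h t| ≤ h * (L1 : ℝ) * ((bdry V (1, 0)).card : ℝ) ∧
    2 * |∑ t ∈ V, cellField L1 L2 h t| ≤ h * (L2 : ℝ) * ((bdry V (0, 1)).card : ℝ) ∧
    2 * |∑ t ∈ V, cellField L1 L2 h t| ≤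
      h * ((L1 : ℝ) * (L2 : ℝ) / ((L1 : ℝ) + (L2 : ℝ))) *
        (((bdry V (1, 0)).card : ℝ) + ((bdry V (0, 1)).card : ℝ)) := by
  classical
  have hsign : ∀ t : ℤ × ℤ, cellSign L1 L2 t = lsign L1 t.1 * lsign L2 t.2 := by
    intro t
    unfold cellSign lsign
    by_cases h1 : Even (Int.fdiv t.1 (L1:ℤ)) <;>
      by_cases h2 : Even (Int.fdiv t.2 (L2:ℤ)) <;>
      simp [Int.even_add, h1, h2]
  have hH : |∑ t ∈ V, cellSign L1 L2 t| ≤ ((L1:ℝ)/2) * ((bdry V (1, 0)).card : ℝ) := by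
    apply abel_bound (1,0) (fun t => saw L1 t.1 * lsign L2 t.2) _ ((L1:ℝ)/2)
    · intro t
      rw [abs_mul, abs_lsign, mul_one]
      exact abs_saw_le L1 hL1 t.1
    · intro t
      simp only [Prod.fst_add, Prod.snd_add, add_zero]
      rw [hsign t, ← saw_step L1 hL1 t.1]
      ring
  have hV : |∑ t ∈ V, cellSign L1 L2 t| ≤ ((L2:ℝ)/2) * ((bdry V (0, 1)).card : ℝ) := by
    apply abel_bound (0,1) (fun t => lsign L1 t.1 * saw L2 t.2) _ ((L2:ℝ)/2)
    · intro t
      rw [abs_mul, abs_lsign, one_mul]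
      exact abs_saw_le L2 hL2 t.2
    · intro t
      simp only [Prod.fst_add, Prod.snd_add, add_zero]
      rw [hsign t, ← saw_step L2 hL2 t.2]
      ring
  have hsum : ∑ t ∈ V, cellField L1 L2 h t = h * ∑ t ∈ V, cellSign L1 L2 t := by
    rw [Finset.mul_sum]; rfl
  have habs : |∑ t ∈ V, cellField L1 L2 h t| = h * |∑ t ∈ V, cellSign L1 L2 t| := by
    rw [hsum, abs_mul, abs_of_pos hh]
  have hb1 : 2 * |∑ t ∈ V, cellField L1 L2 h t| ≤ h * (L1:ℝ) * ((bdry V (1, 0)).card : ℝ) := by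
    rw [habs]
    nlinarith [hH, hh.le]
  have hb2 : 2 * |∑ t ∈ V, cellField L1 L2 h t| ≤ h * (L2:ℝ) * ((bdry V (0, 1)).card : ℝ) := by
    rw [habs]
    nlinarith [hV, hh.le]
  refine ⟨hb1, hb2, ?_⟩
  set a := 2 * |∑ t ∈ V, cellField L1 L2 h t| with ha
  have ha0 : 0 ≤ a := by positivity
  have hL1' : (0:ℝ) < (L1:ℝ) := by exact_mod_cast hL1
  have hL2' : (0:ℝ) < (L2:ℝ) := by exact_mod_cast hL2
  have hsum' : (0:ℝ) < (L1:ℝ) + (L2:ℝ) := by linarith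
  rw [div_eq_mul_inv, show h * ((L1:ℝ) * (L2:ℝ) * ((L1:ℝ) + (L2:ℝ))⁻¹) *
      (((bdry V (1, 0)).card : ℝ) + ((bdry V (0, 1)).card : ℝ)) =
      h * (L1:ℝ) * (L2:ℝ) * (((bdry V (1, 0)).card : ℝ) + ((bdry V (0, 1)).card : ℝ)) /
      ((L1:ℝ) + (L2:ℝ)) by ring, le_div_iff₀ hsum']
  nlinarith [mul_le_mul_of_nonneg_left hb1 hL2'.le, mul_le_mul_of_nonneg_left hb2 hL1'.le]
end

section
/- Let L₁, L₂ be positive integers, J > 0, h > 0, and suppose h < 2J/L₁ + 2J/L₂. Then for every finite nonempty set V ⊂ ℤ² one has 2J·|∂V| + 2Σ_{t∈V} h(t) ≥ (2J − h·L₁L₂/(L₁+L₂))·|∂V| and 2J·|∂V| − 2Σ_{t∈V} h(t) ≥ (2J − h·L₁L₂/(L₁+L₂))·|∂V|, where 2J − h·L₁L₂/(L₁+L₂) > 0. In particular, the constant configurations σ⁺ ≡ +1 and σ⁻ ≡ −1 are ground states of the cell-board Ising Hamiltonian and satisfy the Peierls condition with Peierls constant c_P = 2J − h·L₁L₂/(L₁+L₂).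 -/
/-- Total number of boundary edges `|∂V| = |∂ʰV| + |∂ᵛV|`. -/
def bdryCard (V : Finset (ℤ × ℤ)) : ℕ :=
  (bdry V (1, 0)).card + (bdry V (0, 1)).card

/-- 1D sign sequence. -/
def epsZ (L : ℕ) (n : ℤ) : ℤ := if Even (n / (L : ℤ)) then 1 else -1

/-- Shifted partial-sum function: `2·F(n) − L` where `F` is the prefix sum of `epsZ`. -/
def GZ (L : ℕ) (n : ℤ) : ℤ :=
  if Even (n / (L : ℤ)) then 2 * (n % (L : ℤ)) - L else (L : ℤ) - 2 * (n % (L : ℤ))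

lemma GZ_step (L : ℕ) (hL : 0 < L) (n : ℤ) :
    GZ L (n + 1) - GZ L n = 2 * epsZ L n := by
  have hL' : (0 : ℤ) < (L : ℤ) := by exact_mod_cast hL
  have hr0 : 0 ≤ n % (L : ℤ) := Int.emod_nonneg n (by omega)
  have hrL : n % (L : ℤ) < (L : ℤ) := Int.emod_lt_of_pos n hL'
  have hn : (L : ℤ) * (n / (L : ℤ)) + n % (L : ℤ) = n := Int.mul_ediv_add_emod n (L : ℤ)
  set q := n / (L : ℤ) with hq
  set r := n % (L : ℤ) with hrdef
  by_cases hc : r + 1 < (L : ℤ)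
  · have h1 : (n + 1) / (L : ℤ) = q := by
      have : n + 1 = (r + 1) + q * (L : ℤ) := by linarith [hn]
      rw [this, Int.add_mul_ediv_right _ _ (by omega : (L:ℤ) ≠ 0),
        Int.ediv_eq_zero_of_lt (by omega) hc]
      ring
    have h2 : (n + 1) % (L : ℤ) = r + 1 := by
      have : n + 1 = (r + 1) + (L : ℤ) * q := by linarith [hn]
      rw [this, Int.add_mul_emod_self_left, Int.emod_eq_of_lt (by omega) hc]
    unfold GZ epsZ
    rw [h1, h2, ← hq]
    by_cases hpar : Even q <;> simp [hpar] <;> ring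
  · have hrl : r = (L : ℤ) - 1 := by omega
    have h1 : (n + 1) / (L : ℤ) = q + 1 := by
      have : n + 1 = (L : ℤ) * (q + 1) := by rw [mul_add]; omega
      rw [this, Int.mul_ediv_cancel_left _ (by omega : (L:ℤ) ≠ 0)]
    have h2 : (n + 1) % (L : ℤ) = 0 := by
      have : n + 1 = (L : ℤ) * (q + 1) := by rw [mul_add]; omega
      rw [this, Int.mul_emod_right]
    unfold GZ epsZ
    rw [h1, h2, ← hq]
    by_cases hpar : Even q
    · have : ¬ Even (q + 1) := by simp [Int.even_add_one, hpar]
      simp only [hpar, this, if_true, if_false]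
      omega
    · have : Even (q + 1) := Int.even_add_one.mpr hpar
      simp only [hpar, this, if_true, if_false]
      omega

lemma abs_GZ_le (L : ℕ) (hL : 0 < L) (n : ℤ) : |GZ L n| ≤ (L : ℤ) := by
  have hL' : (0 : ℤ) < (L : ℤ) := by exact_mod_cast hL
  have hr0 : 0 ≤ n % (L : ℤ) := Int.emod_nonneg n (by omega)
  have hrL : n % (L : ℤ) < (L : ℤ) := Int.emod_lt_of_pos n hL'
  unfold GZ
  rw [abs_le]
  split <;> omega

lemma abs_epsZ (L : ℕ) (n : ℤ) : |epsZ L n| = 1 := by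
  unfold epsZ; split <;> simp

/-- Summation by parts over a finite set. -/
lemma sum_by_parts (V : Finset (ℤ × ℤ)) (e : ℤ × ℤ) (g : ℤ × ℤ → ℤ) :
    ∑ t ∈ V, (g (t + e) - g t)
      = ∑ u ∈ bdry V e,
          ((if u ∈ V then (1:ℤ) else 0) - (if u + e ∈ V then (1:ℤ) else 0)) * g (u + e) := by
  classical
  set T := V ∪ V.image (fun u => u - e) with hT
  have hmem : ∀ u : ℤ × ℤ, u + e ∈ V ↔ u ∈ V.image (fun x => x - e) := by
    intro u
    simp only [Finset.mem_image]
    constructor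
    · intro h; exact ⟨u + e, h, by abel⟩
    · rintro ⟨v, hv, rfl⟩; simpa using hv
  have h1 : ∑ u ∈ bdry V e,
        ((if u ∈ V then (1:ℤ) else 0) - (if u + e ∈ V then (1:ℤ) else 0)) * g (u + e)
      = ∑ u ∈ T,
        ((if u ∈ V then (1:ℤ) else 0) - (if u + e ∈ V then (1:ℤ) else 0)) * g (u + e) := by
    unfold bdry
    apply Finset.sum_filter_of_ne
    intro u _ hne hiff
    apply hne
    by_cases hu : u ∈ V
    · simp [hu, hiff.mp hu]
    · have h2 : u + e ∉ V := fun h => hu (hiff.mpr h)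
      simp [hu, h2]
  have hTV : T ∩ V = V := Finset.inter_eq_right.mpr Finset.subset_union_left
  have hTV' : T ∩ V.image (fun x => x - e) = V.image (fun x => x - e) :=
    Finset.inter_eq_right.mpr Finset.subset_union_right
  have hsplit : ∑ u ∈ T,
        ((if u ∈ V then (1:ℤ) else 0) - (if u + e ∈ V then (1:ℤ) else 0)) * g (u + e)
      = (∑ u ∈ T, (if u ∈ V then g (u + e) else 0))
        - ∑ u ∈ T, (if u + e ∈ V then g (u + e) else 0) := by
    rw [← Finset.sum_sub_distrib]
    refine Finset.sum_congr rfl fun u _ => ?_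
    by_cases h1' : u ∈ V <;> by_cases h2' : u + e ∈ V <;> simp [h1', h2']
  have hA : ∑ u ∈ T, (if u ∈ V then g (u + e) else 0) = ∑ u ∈ V, g (u + e) := by
    rw [Finset.sum_ite_mem, hTV]
  have hB : ∑ u ∈ T, (if u + e ∈ V then g (u + e) else 0) = ∑ u ∈ V, g u := by
    calc ∑ u ∈ T, (if u + e ∈ V then g (u + e) else 0)
        = ∑ u ∈ T, (if u ∈ V.image (fun x => x - e) then g (u + e) else 0) :=
          Finset.sum_congr rfl fun u _ => if_congr (hmem u) rfl rfl
      _ = ∑ u ∈ T ∩ V.image (fun x => x - e), g (u + e) := Finset.sum_ite_mem _ _ _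
      _ = ∑ u ∈ V.image (fun x => x - e), g (u + e) := by rw [hTV']
      _ = ∑ v ∈ V, g (v - e + e) :=
          Finset.sum_image (by intro x _ y _ hxy; simpa using congrArg (· + e) hxy)
      _ = ∑ v ∈ V, g v :=
          Finset.sum_congr rfl fun v _ => congrArg g (by abel)
  rw [h1, hsplit, hA, hB, ← Finset.sum_sub_distrib]

lemma abs_sum_step_le (V : Finset (ℤ × ℤ)) (e : ℤ × ℤ) (g : ℤ × ℤ → ℤ) (C : ℤ)
    (hC : ∀ u, |g u| ≤ C) :
    |∑ t ∈ V, (g (t + e) - g t)| ≤ C * (bdry V e).card := by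
  have hC0 : 0 ≤ C := le_trans (abs_nonneg _) (hC 0)
  rw [sum_by_parts]
  calc |∑ u ∈ bdry V e,
          ((if u ∈ V then (1:ℤ) else 0) - (if u + e ∈ V then (1:ℤ) else 0)) * g (u + e)|
      ≤ ∑ u ∈ bdry V e,
          |((if u ∈ V then (1:ℤ) else 0) - (if u + e ∈ V then (1:ℤ) else 0)) * g (u + e)| :=
        Finset.abs_sum_le_sum_abs _ _
    _ ≤ ∑ _u ∈ bdry V e, C := by
        apply Finset.sum_le_sum
        intro u _
        rw [abs_mul]
        have h1 : |(if u ∈ V then (1:ℤ) else 0) - (if u + e ∈ V then (1:ℤ) else 0)| ≤ 1 := by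
          by_cases h1' : u ∈ V <;> by_cases h2' : u + e ∈ V <;> simp [h1', h2']
        calc |(if u ∈ V then (1:ℤ) else 0) - (if u + e ∈ V then (1:ℤ) else 0)| * |g (u + e)|
            ≤ 1 * C := mul_le_mul h1 (hC _) (abs_nonneg _) zero_le_one
          _ = C := one_mul C
    _ = C * (bdry V e).card := by rw [Finset.sum_const, nsmul_eq_mul, mul_comm]

lemma abs_two_sum_le_dir1 (L1 L2 : ℕ) (hL1 : 0 < L1) (V : Finset (ℤ × ℤ)) :
    |2 * ∑ t ∈ V, epsZ L1 t.1 * epsZ L2 t.2| ≤ (L1 : ℤ) * (bdry V (1, 0)).card := by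
  have h := abs_sum_step_le V (1, 0) (fun u => epsZ L2 u.2 * GZ L1 u.1) (L1 : ℤ)
    (fun u => by
      rw [abs_mul, abs_epsZ, one_mul]; exact abs_GZ_le L1 hL1 u.1)
  have hsum : ∑ t ∈ V, (epsZ L2 (t + (1, 0)).2 * GZ L1 (t + (1, 0)).1
        - epsZ L2 t.2 * GZ L1 t.1)
      = 2 * ∑ t ∈ V, epsZ L1 t.1 * epsZ L2 t.2 := by
    rw [Finset.mul_sum]
    apply Finset.sum_congr rfl
    intro t _
    have h1 : (t + ((1:ℤ), (0:ℤ))).1 = t.1 + 1 := rfl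
    have h2 : (t + ((1:ℤ), (0:ℤ))).2 = t.2 := by simp [Prod.snd_add]
    rw [h1, h2, ← mul_sub, GZ_step L1 hL1]
    ring
  rw [hsum] at h
  exact h

lemma abs_two_sum_le_dir2 (L1 L2 : ℕ) (hL2 : 0 < L2) (V : Finset (ℤ × ℤ)) :
    |2 * ∑ t ∈ V, epsZ L1 t.1 * epsZ L2 t.2| ≤ (L2 : ℤ) * (bdry V (0, 1)).card := by
  have h := abs_sum_step_le V (0, 1) (fun u => epsZ L1 u.1 * GZ L2 u.2) (L2 : ℤ)
    (fun u => by
      rw [abs_mul, abs_epsZ, one_mul]; exact abs_GZ_le L2 hL2 u.2)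
  have hsum : ∑ t ∈ V, (epsZ L1 (t + (0, 1)).1 * GZ L2 (t + (0, 1)).2
        - epsZ L1 t.1 * GZ L2 t.2)
      = 2 * ∑ t ∈ V, epsZ L1 t.1 * epsZ L2 t.2 := by
    rw [Finset.mul_sum]
    apply Finset.sum_congr rfl
    intro t _
    have h1 : (t + ((0:ℤ), (1:ℤ))).1 = t.1 := by simp [Prod.fst_add]
    have h2 : (t + ((0:ℤ), (1:ℤ))).2 = t.2 + 1 := rfl
    rw [h1, h2, ← mul_sub, GZ_step L2 hL2]
    ring
  rw [hsum] at h
  exact h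

lemma cellSign_eq (L1 L2 : ℕ) (t : ℤ × ℤ) :
    cellSign L1 L2 t = ((epsZ L1 t.1 * epsZ L2 t.2 : ℤ) : ℝ) := by
  unfold cellSign epsZ
  rw [Int.fdiv_eq_ediv_of_nonneg _ (by positivity), Int.fdiv_eq_ediv_of_nonneg _ (by positivity)]
  by_cases h1 : Even (t.1 / (L1 : ℤ)) <;> by_cases h2 : Even (t.2 / (L2 : ℤ)) <;>
    simp [h1, h2, Int.even_add]

/-- if `h < 2J/L₁ + 2J/L₂` then the Peierls constant
`c_P = 2J − h·L₁L₂/(L₁+L₂)` is positive and for every finite nonempty `V ⊂ ℤ²` the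
energy cost of flipping the constant configurations `σ⁺ ≡ +1` or `σ⁻ ≡ −1` on `V`,
namely `2J·|∂V| ± 2Σ_{t∈V} h(t)`, is at least `c_P·|∂V|`; i.e. `σ⁺` and `σ⁻` are
ground states satisfying the Peierls condition with Peierls constant `c_P`. -/
theorem peierls_condition_cellBoard (L1 L2 : ℕ) (hL1 : 0 < L1) (hL2 : 0 < L2)
    (J h : ℝ) (hJ : 0 < J) (hh : 0 < h)
    (hcond : h < 2 * J / (L1 : ℝ) + 2 * J / (L2 : ℝ)) :
    0 < 2 * J - h * (L1 : ℝ) * (L2 : ℝ) / ((L1 : ℝ) + (L2 : ℝ)) ∧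
    ∀ V : Finset (ℤ × ℤ), V.Nonempty →
      2 * J * (bdryCard V : ℝ) + 2 * ∑ t ∈ V, cellField L1 L2 h t ≥
        (2 * J - h * (L1 : ℝ) * (L2 : ℝ) / ((L1 : ℝ) + (L2 : ℝ))) * (bdryCard V : ℝ) ∧
      2 * J * (bdryCard V : ℝ) - 2 * ∑ t ∈ V, cellField L1 L2 h t ≥
        (2 * J - h * (L1 : ℝ) * (L2 : ℝ) / ((L1 : ℝ) + (L2 : ℝ))) * (bdryCard V : ℝ) := by
  have hL1' : (0 : ℝ) < (L1 : ℝ) := by exact_mod_cast hL1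
  have hL2' : (0 : ℝ) < (L2 : ℝ) := by exact_mod_cast hL2
  have hLs : (0 : ℝ) < (L1 : ℝ) + (L2 : ℝ) := by linarith
  constructor
  · rw [sub_pos, div_lt_iff₀ hLs]
    have h1 : h * (L1 : ℝ) * (L2 : ℝ) < (2 * J / (L1 : ℝ) + 2 * J / (L2 : ℝ)) * (L1 : ℝ) * (L2 : ℝ) := by
      have := mul_pos hL1' hL2'
      nlinarith
    have h2 : (2 * J / (L1 : ℝ) + 2 * J / (L2 : ℝ)) * (L1 : ℝ) * (L2 : ℝ)
        = 2 * J * ((L1 : ℝ) + (L2 : ℝ)) := by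
      field_simp
      ring
    linarith [h1, h2.symm.le, h2.le]
  · intro V _
    set S : ℤ := ∑ t ∈ V, epsZ L1 t.1 * epsZ L2 t.2 with hS
    have hsum : ∑ t ∈ V, cellField L1 L2 h t = h * (S : ℝ) := by
      unfold cellField
      rw [← Finset.mul_sum, hS]
      push_cast
      congr 1
      exact Finset.sum_congr rfl (fun t _ => by rw [cellSign_eq]; push_cast; ring)
    set a : ℝ := ((bdry V (1, 0)).card : ℝ) with ha
    set b : ℝ := ((bdry V (0, 1)).card : ℝ) with hb
    have hn : (bdryCard V : ℝ) = a + b := by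
      rw [bdryCard, ha, hb]; push_cast; ring
    have habs1 : |2 * (S : ℝ)| ≤ (L1 : ℝ) * a := by
      have := abs_two_sum_le_dir1 L1 L2 hL1 V
      rw [← hS] at this
      calc |2 * (S : ℝ)| = ((|2 * S| : ℤ) : ℝ) := by push_cast; rfl
        _ ≤ (((L1 : ℤ) * (bdry V (1, 0)).card : ℤ) : ℝ) := by exact_mod_cast this
        _ = (L1 : ℝ) * a := by push_cast [ha]; ring
    have habs2 : |2 * (S : ℝ)| ≤ (L2 : ℝ) * b := by
      have := abs_two_sum_le_dir2 L1 L2 hL2 V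
      rw [← hS] at this
      calc |2 * (S : ℝ)| = ((|2 * S| : ℤ) : ℝ) := by push_cast; rfl
        _ ≤ (((L2 : ℤ) * (bdry V (0, 1)).card : ℤ) : ℝ) := by exact_mod_cast this
        _ = (L2 : ℝ) * b := by push_cast [hb]; ring
    have hc : h * |2 * (S : ℝ)| ≤ h * (L1 : ℝ) * (L2 : ℝ) / ((L1 : ℝ) + (L2 : ℝ)) * (a + b) := by
      rw [div_mul_eq_mul_div, le_div_iff₀ hLs]
      nlinarith [mul_le_mul_of_nonneg_left habs1 (mul_pos hh hL2').le,
        mul_le_mul_of_nonneg_left habs2 (mul_pos hh hL1').le]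
    have hup : h * (2 * (S : ℝ)) ≤ h * |2 * (S : ℝ)| :=
      mul_le_mul_of_nonneg_left (le_abs_self _) hh.le
    have hdown : h * (-(2 * (S : ℝ))) ≤ h * |2 * (S : ℝ)| :=
      mul_le_mul_of_nonneg_left (neg_le_abs _) hh.le
    rw [hsum, hn]
    constructor <;> nlinarith [hc, hup, hdown]
end

section
/- (Peierls condition for the alternating-strips model.) Let L be a positive integer, J > 0, h > 0 with h < 2J/L, and let h_L be the alternating-strips field on ℤ². Then for every finite set V ⊂ ℤ²: 2·|Σ_{t∈V} h_L(t)| ≤ h·L·|∂ᵛV|, and consequently, for every finite nonempty V, 2J·|∂V| + 2Σ_{t∈V} h_L(t) ≥ (2J − hL)·|∂V| and 2J·|∂V| − 2Σ_{t∈V} h_L(t) ≥ (2J − hL)·|∂V|. In particular the constant configurations σ⁺ ≡ +1 and σ⁻ ≡ −1 are ground states of the strips Ising Hamiltonian and satisfy the Peierls condition with Peierls constant 2J − hL. -/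
/-- The alternating-strips external field on `ℤ²`: `+h` if `⌊t₂/L⌋` is even
(floor division) and `−h` otherwise. -/
noncomputable def stripsField (L : ℕ) (h : ℝ) (t : ℤ × ℤ) : ℝ :=
  if Even (Int.fdiv t.2 (L : ℤ)) then h else -h

/-- A potential for the strips field: `pot L h (y+1) - pot L h y = ±h`, `|pot| ≤ hL/2`. -/
noncomputable def pot (L : ℕ) (h : ℝ) (y : ℤ) : ℝ :=
  (if Even (y / (L : ℤ)) then (1:ℝ) else -1) * h * (((y % (L : ℤ) : ℤ) : ℝ) - L / 2)

lemma pot_step (L : ℕ) (hL : 0 < L) (h : ℝ) (y : ℤ) :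
    pot L h (y + 1) - pot L h y = (if Even (y / (L : ℤ)) then h else -h) := by
  have hLz : (0:ℤ) < L := by exact_mod_cast hL
  have hr0 : 0 ≤ y % (L:ℤ) := Int.emod_nonneg y hLz.ne'
  have hrL : y % (L:ℤ) < L := Int.emod_lt_of_pos y hLz
  rcases lt_or_eq_of_le (by omega : y % (L:ℤ) + 1 ≤ L) with hcase | hcase
  · -- no wrap
    have hy : y + 1 = (y % (L:ℤ) + 1) + (L:ℤ) * (y / L) := by
      have := Int.mul_ediv_add_emod y L; omega
    have hdiv : (y + 1) / (L:ℤ) = y / L := by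
      rw [hy, Int.add_mul_ediv_left _ _ hLz.ne', Int.ediv_eq_zero_of_lt (by omega) hcase,
        zero_add]
    have hmod : (y + 1) % (L:ℤ) = y % L + 1 := by
      rw [hy, Int.add_mul_emod_self_left, Int.emod_eq_of_lt (by omega) hcase]
    unfold pot
    rw [hdiv, hmod]
    rcases Int.even_or_odd (y / (L:ℤ)) with he | ho
    · rw [if_pos he, if_pos he]; push_cast; ring
    · rw [if_neg (Int.not_even_iff_odd.2 ho), if_neg (Int.not_even_iff_odd.2 ho)]
      push_cast; ring
  · -- wrap: y % L = L - 1
    have hy : y + 1 = (L:ℤ) * (y / L + 1) := by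
      have := Int.mul_ediv_add_emod y L; rw [mul_add, mul_one]; omega
    have hdiv : (y + 1) / (L:ℤ) = y / L + 1 := by
      rw [hy, Int.mul_ediv_cancel_left _ hLz.ne']
    have hmod : (y + 1) % (L:ℤ) = 0 := by rw [hy]; exact Int.mul_emod_right _ _
    have hr : y % (L:ℤ) = L - 1 := by omega
    unfold pot
    rw [hdiv, hmod, hr]
    rcases Int.even_or_odd (y / (L:ℤ)) with he | ho
    · rw [if_pos he, if_neg (by simpa [Int.even_add_one] using he), if_pos he]
      push_cast; ring
    · rw [if_neg (Int.not_even_iff_odd.2 ho),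
        if_pos (Int.even_add_one.2 (Int.not_even_iff_odd.2 ho)),
        if_neg (Int.not_even_iff_odd.2 ho)]
      push_cast; ring

lemma pot_abs_le (L : ℕ) (hL : 0 < L) (h : ℝ) (hh : 0 ≤ h) (y : ℤ) :
    |pot L h y| ≤ h * L / 2 := by
  have hLz : (0:ℤ) < L := by exact_mod_cast hL
  have hr0 : 0 ≤ y % (L:ℤ) := Int.emod_nonneg y hLz.ne'
  have hrL : y % (L:ℤ) < L := Int.emod_lt_of_pos y hLz
  have hr0' : (0:ℝ) ≤ ((y % (L:ℤ) : ℤ) : ℝ) := by exact_mod_cast hr0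
  have hrL' : ((y % (L:ℤ) : ℤ) : ℝ) ≤ (L:ℝ) := by exact_mod_cast hrL.le
  have habs : |((y % (L:ℤ) : ℤ) : ℝ) - L / 2| ≤ (L:ℝ) / 2 := by
    rw [abs_le]; constructor <;> linarith
  unfold pot
  rw [abs_mul, abs_mul]
  split_ifs <;> simp [abs_of_nonneg hh] <;> nlinarith [abs_nonneg (((y % (L:ℤ) : ℤ) : ℝ) - L / 2)]

lemma strips_eq_pot (L : ℕ) (hL : 0 < L) (h : ℝ) (t : ℤ × ℤ) :
    stripsField L h t = pot L h (t.2 + 1) - pot L h t.2 := by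
  rw [pot_step L hL h t.2, stripsField, Int.fdiv_eq_ediv_of_nonneg _ (by positivity)]

lemma key_bound (L : ℕ) (hL : 0 < L) (h : ℝ) (hh : 0 ≤ h) (V : Finset (ℤ × ℤ)) :
    2 * |∑ t ∈ V, stripsField L h t| ≤ h * (L : ℝ) * ((bdry V (0, 1)).card : ℝ) := by
  classical
  set e : ℤ × ℤ := (0, 1)
  have hinj : Function.Injective (fun u : ℤ × ℤ => u + e) := fun a b hab => by
    simpa using hab
  have hinj' : Function.Injective (fun u : ℤ × ℤ => u - e) := fun a b hab => by
    simpa using hab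
  set V' : Finset (ℤ × ℤ) := V.image (fun u => u + e) with hV'
  set W : Finset (ℤ × ℤ) := V.image (fun u => u - e) with hW
  set g : ℤ × ℤ → ℝ := fun t => pot L h t.2 with hg
  -- the telescoping identity
  have hsum : ∑ t ∈ V, stripsField L h t = ∑ t ∈ V' \ V, g t - ∑ t ∈ V \ V', g t := by
    rw [Finset.sum_sdiff_sub_sum_sdiff]
    have h1 : ∑ t ∈ V', g t = ∑ t ∈ V, g (t + e) :=
      Finset.sum_image (fun a _ b _ hab => hinj hab)
    rw [h1, ← Finset.sum_sub_distrib]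
    refine Finset.sum_congr rfl fun t _ => ?_
    rw [strips_eq_pot L hL h t]
    simp [hg, e]
  -- membership characterizations
  have himg : ∀ u : ℤ × ℤ, (∃ a ∈ V, a - e = u) ↔ u + e ∈ V := fun u =>
    ⟨by rintro ⟨v, hv, rfl⟩; simpa using hv, fun hu => ⟨u + e, hu, by ring⟩⟩
  have memV' : ∀ u : ℤ × ℤ, u ∈ V' ↔ u - e ∈ V := by
    intro u
    simp only [hV', Finset.mem_image]
    constructor
    · rintro ⟨v, hv, rfl⟩; simpa using hv
    · intro hu; exact ⟨u - e, hu, by ring⟩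
  have memW : ∀ u : ℤ × ℤ, u ∈ W ↔ u + e ∈ V := by
    intro u
    simp only [hW, Finset.mem_image]
    constructor
    · rintro ⟨v, hv, rfl⟩; simpa using hv
    · intro hu; exact ⟨u + e, hu, by ring⟩
  -- boundary as disjoint union
  have hbd : bdry V e = (V \ W) ∪ (W \ V) := by
    ext u
    simp only [bdry, Finset.mem_filter, Finset.mem_union, Finset.mem_sdiff,
      Finset.mem_image, memW, himg]
    tauto
  have hcard : (bdry V e).card = (V' \ V).card + (V \ V').card := by
    have h2 : V' \ V = (V \ W).image (fun u => u + e) := by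
      ext u
      simp only [Finset.mem_sdiff, Finset.mem_image, memV', memW]
      constructor
      · rintro ⟨h1, h2⟩; exact ⟨u - e, ⟨h1, by simpa using h2⟩, by ring⟩
      · rintro ⟨w, ⟨hw1, hw2⟩, rfl⟩; exact ⟨by simpa using hw1, by simpa using hw2⟩
    have h3 : V \ V' = (W \ V).image (fun u => u + e) := by
      ext u
      simp only [Finset.mem_sdiff, Finset.mem_image, memV', memW]
      constructor
      · rintro ⟨h1, h2⟩; exact ⟨u - e, ⟨by simpa using h1, by simpa using h2⟩, by ring⟩
      · rintro ⟨w, ⟨hw1, hw2⟩, rfl⟩; exact ⟨by simpa using hw1, by simpa using hw2⟩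
    rw [hbd, Finset.card_union_of_disjoint, h2, h3,
      Finset.card_image_of_injective _ hinj, Finset.card_image_of_injective _ hinj]
    exact disjoint_sdiff_sdiff
  -- put together
  have hb1 : |∑ t ∈ V' \ V, g t| ≤ ((V' \ V).card : ℝ) * (h * L / 2) := by
    calc |∑ t ∈ V' \ V, g t| ≤ ∑ t ∈ V' \ V, |g t| := Finset.abs_sum_le_sum_abs _ _
    _ ≤ ((V' \ V).card : ℝ) * (h * L / 2) := by
        rw [← nsmul_eq_mul]
        exact Finset.sum_le_card_nsmul _ _ _ fun t _ => pot_abs_le L hL h hh t.2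
  have hb2 : |∑ t ∈ V \ V', g t| ≤ ((V \ V').card : ℝ) * (h * L / 2) := by
    calc |∑ t ∈ V \ V', g t| ≤ ∑ t ∈ V \ V', |g t| := Finset.abs_sum_le_sum_abs _ _
    _ ≤ ((V \ V').card : ℝ) * (h * L / 2) := by
        rw [← nsmul_eq_mul]
        exact Finset.sum_le_card_nsmul _ _ _ fun t _ => pot_abs_le L hL h hh t.2
  have habs : |∑ t ∈ V, stripsField L h t|
      ≤ (((V' \ V).card : ℝ) + ((V \ V').card : ℝ)) * (h * L / 2) := by
    rw [hsum]
    calc |∑ t ∈ V' \ V, g t - ∑ t ∈ V \ V', g t|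
        ≤ |∑ t ∈ V' \ V, g t| + |∑ t ∈ V \ V', g t| := abs_sub _ _
    _ ≤ (((V' \ V).card : ℝ) + ((V \ V').card : ℝ)) * (h * L / 2) := by
        rw [add_mul]; exact add_le_add hb1 hb2
  have : ((bdry V e).card : ℝ) = ((V' \ V).card : ℝ) + ((V \ V').card : ℝ) := by
    rw [hcard]; push_cast; ring
  rw [this]
  nlinarith [habs]

/-- Peierls condition for the alternating-strips model: if `h < 2J/L`
then for every finite `V ⊂ ℤ²` one has `2·|Σ_{t∈V} h_L(t)| ≤ h·L·|∂ᵛV|`; the Peierls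
constant `2J − hL` is positive; and for every finite nonempty `V` the energy cost of
flipping `σ⁺ ≡ +1` or `σ⁻ ≡ −1` on `V`, namely `2J·|∂V| ± 2Σ_{t∈V} h_L(t)`, is at
least `(2J − hL)·|∂V|`; i.e. `σ⁺` and `σ⁻` are ground states satisfying the Peierls
condition with Peierls constant `2J − hL`. -/
theorem peierls_condition_strips (L : ℕ) (hL : 0 < L) (J h : ℝ) (hJ : 0 < J)
    (hh : 0 < h) (hcond : h < 2 * J / (L : ℝ)) :
    (∀ V : Finset (ℤ × ℤ),
      2 * |∑ t ∈ V, stripsField L h t| ≤ h * (L : ℝ) * ((bdry V (0, 1)).card : ℝ)) ∧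
    0 < 2 * J - h * (L : ℝ) ∧
    ∀ V : Finset (ℤ × ℤ), V.Nonempty →
      2 * J * (bdryCard V : ℝ) + 2 * ∑ t ∈ V, stripsField L h t ≥
        (2 * J - h * (L : ℝ)) * (bdryCard V : ℝ) ∧
      2 * J * (bdryCard V : ℝ) - 2 * ∑ t ∈ V, stripsField L h t ≥
        (2 * J - h * (L : ℝ)) * (bdryCard V : ℝ) := by
  have hL' : (0:ℝ) < L := by exact_mod_cast hL
  have hpos : 0 < 2 * J - h * (L : ℝ) := by
    have := (lt_div_iff₀ hL').1 hcond
    linarith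
  refine ⟨fun V => key_bound L hL h hh.le V, hpos, fun V _ => ?_⟩
  have hk := key_bound L hL h hh.le V
  have hle : ((bdry V (0,1)).card : ℝ) ≤ (bdryCard V : ℝ) := by
    unfold bdryCard; push_cast; nlinarith [Nat.cast_nonneg (α := ℝ) (bdry V (1,0)).card]
  have h2 : 2 * |∑ t ∈ V, stripsField L h t| ≤ h * (L : ℝ) * (bdryCard V : ℝ) := by
    calc 2 * |∑ t ∈ V, stripsField L h t| ≤ h * (L : ℝ) * ((bdry V (0,1)).card : ℝ) := hk
    _ ≤ h * (L : ℝ) * (bdryCard V : ℝ) := by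
        have := mul_le_mul_of_nonneg_left hle (by positivity : (0:ℝ) ≤ h * (L:ℝ))
        linarith
  have habs1 := neg_abs_le (∑ t ∈ V, stripsField L h t)
  have habs2 := le_abs_self (∑ t ∈ V, stripsField L h t)
  constructor <;> nlinarith
end
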